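/- Let Y_1 and Y_2 be subspaces of a finite-dimensional real inner product space Y, and let P_{Y_2} denote the orthogonal projection onto Y_2. Then P_{Y_2}(Y_1^⊥) = Y_2 ⊖ (Y_1 ∩ Y_2), i.e., the projection of the orthogonal complement of Y_1 onto Y_2 equals the orthogonal complement of Y_1 ∩ Y_2 within Y_2. -/

import Mathlib

/-- Let `Y₁` and `Y₂` be subspaces of a finite-dimensional real inner product space `Y`, and
let `P_{Y₂}` be the orthogonal projection onto `Y₂`. Then `P_{Y₂}(Y₁ᗮ) = Y₂ ⊖ (Y₁ ∩ Y₂)`,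
where `Y₂ ⊖ U` denotes the orthogonal complement of `U` within `Y₂`, i.e. `Y₂ ⊓ Uᗮ`. -/
theorem proj_orthogonal_eq_relative_complement {Y : Type*} [NormedAddCommGroup Y]
    [InnerProductSpace ℝ Y] [FiniteDimensional ℝ Y] (Y₁ Y₂ : Submodule ℝ Y) :
    Submodule.map (Y₂.subtype ∘ₗ (Submodule.orthogonalProjection Y₂).toLinearMap) Y₁ᗮ =
      Y₂ ⊓ (Y₁ ⊓ Y₂)ᗮ := by
  have hsup : (Y₁ ⊓ Y₂)ᗮ = Y₁ᗮ ⊔ Y₂ᗮ := by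
    have h := Submodule.inf_orthogonal Y₁ᗮ Y₂ᗮ
    rw [Y₁.orthogonal_orthogonal, Y₂.orthogonal_orthogonal] at h
    rw [h, Submodule.orthogonal_orthogonal]
  apply le_antisymm
  · rintro _ ⟨x, hx, rfl⟩
    refine ⟨(Submodule.orthogonalProjection Y₂ x).2, ?_⟩
    rintro y ⟨hy1, hy2⟩
    have : (inner ℝ (↑(Submodule.orthogonalProjection Y₂ y)) x : ℝ) =
        inner ℝ (y : Y) (↑(Submodule.orthogonalProjection Y₂ x)) := by
      exact Submodule.inner_starProjection_left_eq_right Y₂ y x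
    rw [show ((Submodule.orthogonalProjection Y₂ y : Y)) = y from
      Submodule.starProjection_eq_self_iff.2 hy2] at this
    show inner ℝ y (↑(Submodule.orthogonalProjection Y₂ x)) = 0
    rw [← this]
    simpa [real_inner_comm] using hx y hy1
  · rintro z ⟨hz2, hzperp⟩
    rw [hsup] at hzperp
    obtain ⟨a, ha, b, hb, rfl⟩ := Submodule.mem_sup.1 hzperp
    refine ⟨a, ha, ?_⟩
    have hab : a + b ∈ Y₂ := hz2
    simp only [LinearMap.comp_apply, ContinuousLinearMap.coe_coe, Submodule.subtype_apply]
    have : Submodule.orthogonalProjection Y₂ a = Submodule.orthogonalProjection Y₂ (a + b) := by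
      rw [map_add, Submodule.orthogonalProjectionOnto_apply_of_mem_orthogonal hb, add_zero]
    rw [this, show ((Submodule.orthogonalProjection Y₂ (a + b) : Y)) = a + b from
      Submodule.starProjection_eq_self_iff.2 hab]
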